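/- Let agent i have a budget-additive SPLC utility with segment rates u_{ijt} ≥ 0 and lengths d_{ijt} > 0 on m goods, let p ∈ ℝ_{>0}^m be prices, and let x_i = (x_{ijt}) with 0 ≤ x_{ijt} ≤ d_{ijt} and u_i(x_i) = Σ_j Σ_t u_{ijt} x_{ijt} > 0. Suppose there exist multipliers r_{ijt} ≥ 0 and γ_i ≥ 0 satisfying the KKT conditions: (i) u_{ijt}/u_i(x_i) ≤ r_{ijt} + p_j + u_{ijt}·γ_i for all j, t; (ii) u_{ijt}/u_i(x_i) = r_{ijt} + p_j + u_{ijt}·γ_i whenever x_{ijt} > 0; (iii) x_{ijt} = d_{ijt} whenever r_{ijt} > 0; and suppose the utility is scaled so that the bang-per-buck equals 1, i.e., u_i(x_i)/(1 − γ_i·u_i(x_i)) = 1 (with γ_i·u_i(x_i) < 1). Then: if x_{ijt} > 0 then u_{ijt}/p_j ≥ 1; and if u_{ijt}/p_j > 1 then x_{ijt} = d_{ijt}. -/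

import Mathlib

open Finset

/-- Proposition 5.1 for budget-additive SPLC utilities. If the bundle
`x` of an agent satisfies the KKT conditions of the Gale demand system with budget 1,
with multipliers `r ≥ 0` (capacities) and `γ ≥ 0` (utility cap), and the utility is
scaled so that the bang-per-buck `u(x)/(1 − γ·u(x))` equals 1, then: the agent only buys
segments with `u_{jt}/p_j ≥ 1`, and fully buys every segment with `u_{jt}/p_j > 1`. -/
theorem splc_mbb_properties
    (m : ℕ) (k : Fin m → ℕ) (d uu : ∀ j : Fin m, Fin (k j) → ℝ)
    (hd : ∀ j t, 0 < d j t) (huu : ∀ j t, 0 ≤ uu j t)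
    (p : Fin m → ℝ) (hp : ∀ j, 0 < p j)
    (x : ∀ j : Fin m, Fin (k j) → ℝ)
    (hx : ∀ j t, 0 ≤ x j t ∧ x j t ≤ d j t)
    (ux : ℝ) (hux_def : ux = ∑ j, ∑ t, uu j t * x j t) (hux_pos : 0 < ux)
    (r : ∀ j : Fin m, Fin (k j) → ℝ) (hr : ∀ j t, 0 ≤ r j t)
    (γ : ℝ) (hγ : 0 ≤ γ)
    (kkt1 : ∀ j t, uu j t / ux ≤ r j t + p j + uu j t * γ)
    (kkt2 : ∀ j t, 0 < x j t → uu j t / ux = r j t + p j + uu j t * γ)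
    (kkt3 : ∀ j t, 0 < r j t → x j t = d j t)
    (hscale' : γ * ux < 1)
    (hscale : ux / (1 - γ * ux) = 1) :
    (∀ j t, 0 < x j t → 1 ≤ uu j t / p j) ∧
    (∀ j t, 1 < uu j t / p j → x j t = d j t) := by
  have hne : (1 - γ * ux) ≠ 0 := by linarith
  have hux_eq : ux = 1 - γ * ux := by
    rw [div_eq_one_iff_eq hne] at hscale; linarith
  have key : ∀ j t, uu j t / ux - uu j t * γ = uu j t := by
    intro j t
    field_simp
    linear_combination (-(uu j t)) * hux_eq
  constructor
  · intro j t hxt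
    have h2 := kkt2 j t hxt
    have hk := key j t
    have : uu j t = r j t + p j := by linarith
    rw [le_div_iff₀ (hp j)]
    have := hr j t
    linarith
  · intro j t hgt
    have h1 := kkt1 j t
    have hk := key j t
    have hup : p j < uu j t := by
      rw [lt_div_iff₀ (hp j)] at hgt; linarith
    have hrpos : 0 < r j t := by linarith
    exact kkt3 j t hrpos
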